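/- For any fixed τ > 0 and μ > 0 there exists M ∈ ℕ such that for every integer m ≥ M, (2μ(m²−1) − τ²·j_{m,1}²)·(2μ(m²−1) − τ²·j_{m,2}²) > 0. -/

import Mathlib

set_option maxHeartbeats 1000000

open Real Set Filter


/-- Bessel function of the first kind of real order `ν`, defined by its power series. -/
noncomputable def besselJ (ν : ℝ) (x : ℝ) : ℝ :=
  ∑' k : ℕ, ((-1 : ℝ) ^ k / (Nat.factorial k * Real.Gamma ((k : ℝ) + ν + 1))) *
    (x / 2) ^ (2 * (k : ℝ) + ν)

/-- `besselJZero ν s` is the `s`-th positive zero of `besselJ ν` (with the convention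
`besselJZero ν 0 = 0`), defined recursively as the infimum of zeros beyond the previous one. -/
noncomputable def besselJZero (ν : ℝ) : ℕ → ℝ
  | 0 => 0
  | s + 1 => sInf {x : ℝ | besselJZero ν s < x ∧ besselJ ν x = 0}

namespace BesselAux

noncomputable def a (ν : ℝ) (k : ℕ) : ℝ :=
  (-1) ^ k / (Nat.factorial k * Real.Gamma ((k : ℝ) + ν + 1))

noncomputable def g (ν t : ℝ) : ℝ := ∑' k : ℕ, a ν k * t ^ k
noncomputable def g1 (ν t : ℝ) : ℝ := ∑' k : ℕ, ((k : ℝ) + 1) * a ν (k + 1) * t ^ k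
noncomputable def g2 (ν t : ℝ) : ℝ :=
  ∑' k : ℕ, ((k : ℝ) + 2) * ((k : ℝ) + 1) * a ν (k + 2) * t ^ k

variable {ν : ℝ}

lemma gamma_arg_pos (hν : 0 ≤ ν) (k : ℕ) : (0:ℝ) < (k : ℝ) + ν + 1 := by positivity

lemma gamma_pos (hν : 0 ≤ ν) (k : ℕ) : 0 < Real.Gamma ((k : ℝ) + ν + 1) :=
  Real.Gamma_pos_of_pos (gamma_arg_pos hν k)

lemma gamma_ge (hν : 0 ≤ ν) (k : ℕ) :
    Real.Gamma (ν + 1) ≤ Real.Gamma ((k : ℝ) + ν + 1) := by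
  induction k with
  | zero => simp
  | succ n ih =>
    have h1 : ((n : ℝ) + ν + 1) ≠ 0 := (gamma_arg_pos hν n).ne'
    have : Real.Gamma (((n:ℝ) + ν + 1) + 1) = ((n:ℝ) + ν + 1) * Real.Gamma ((n:ℝ) + ν + 1) :=
      Real.Gamma_add_one h1
    have h2 : ((n + 1 : ℕ) : ℝ) + ν + 1 = ((n:ℝ) + ν + 1) + 1 := by push_cast; ring
    rw [h2, this]
    nlinarith [gamma_pos hν n, gamma_arg_pos hν n]

lemma abs_a (hν : 0 ≤ ν) (k : ℕ) :
    |a ν k| = 1 / (Nat.factorial k * Real.Gamma ((k : ℝ) + ν + 1)) := by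
  have h := gamma_pos (ν := ν) hν k
  have hk : (0:ℝ) < Nat.factorial k := by positivity
  rw [a, abs_div, abs_pow, abs_neg, abs_one, one_pow, abs_of_pos (by positivity)]

lemma a_bound (hν : 0 ≤ ν) (k : ℕ) :
    |a ν k| ≤ 1 / Real.Gamma (ν + 1) * (1 / Nat.factorial k) := by
  rw [abs_a hν]
  have h1 := gamma_pos (ν := ν) hν k
  have h2 := gamma_ge hν k
  have h3 : 0 < Real.Gamma (ν + 1) := Real.Gamma_pos_of_pos (by linarith)
  have hk : (0:ℝ) < Nat.factorial k := by positivity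
  rw [one_div_mul_one_div, div_le_div_iff₀ (by positivity) (by positivity)]
  nlinarith

lemma a_bound_one (hν : 0 ≤ ν) (k : ℕ) :
    ((k:ℝ) + 1) * |a ν (k + 1)| ≤ 1 / Real.Gamma (ν + 1) * (1 / Nat.factorial k) := by
  rw [abs_a hν]
  have h1 := gamma_pos (ν := ν) hν (k+1)
  have h2 := gamma_ge hν (k+1)
  have h3 : 0 < Real.Gamma (ν + 1) := Real.Gamma_pos_of_pos (by linarith)
  have hk : (0:ℝ) < Nat.factorial k := by positivity
  have hfact : ((k+1).factorial : ℝ) = ((k:ℝ)+1) * (Nat.factorial k : ℝ) := by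
    rw [Nat.factorial_succ]; push_cast; ring
  rw [hfact, one_div_mul_one_div, mul_one_div, div_le_div_iff₀ (by positivity) (by positivity)]
  have h4 : (0:ℝ) < Gamma (ν+1) * ↑k.factorial := by positivity
  have h5 : ((k:ℝ)+1) * (Gamma (ν+1) * ↑k.factorial) ≤ ((k:ℝ)+1) * (↑k.factorial * Gamma (↑(k+1) + ν + 1)) := by
    nlinarith
  nlinarith
  
lemma a_bound_two (hν : 0 ≤ ν) (k : ℕ) :
    ((k:ℝ) + 2) * (((k:ℝ) + 1) * |a ν (k + 2)|) ≤ 1 / Real.Gamma (ν + 1) * (1 / Nat.factorial k) := by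
  rw [abs_a hν]
  have h1 := gamma_pos (ν := ν) hν (k+2)
  have h2 := gamma_ge hν (k+2)
  have h3 : 0 < Real.Gamma (ν + 1) := Real.Gamma_pos_of_pos (by linarith)
  have hk : (0:ℝ) < Nat.factorial k := by positivity
  have hfact : ((k+2).factorial : ℝ) = ((k:ℝ)+2) * (((k:ℝ)+1) * (Nat.factorial k : ℝ)) := by
    show ((k+1+1).factorial : ℝ) = _
    rw [Nat.factorial_succ, Nat.factorial_succ]; push_cast; ring
  rw [hfact, one_div_mul_one_div, mul_one_div, mul_div_assoc', div_le_div_iff₀ (by positivity) (by positivity)]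
  have h5 : Gamma (ν+1) * ↑k.factorial ≤ ↑k.factorial * Gamma (↑(k+2) + ν + 1) := by nlinarith
  have h6 : (0:ℝ) ≤ ((k:ℝ)+2) * ((k:ℝ)+1) - 1 := by nlinarith
  nlinarith [mul_pos hk h1]


lemma summable_master (c R : ℝ) :
    Summable (fun k : ℕ => c * (R ^ k / (Nat.factorial k : ℝ))) :=
  (Real.summable_pow_div_factorial R).mul_left c

lemma summable_shift (c R : ℝ) :
    Summable (fun k : ℕ => c * ((k : ℝ) * R ^ (k - 1) / (Nat.factorial k : ℝ))) := by
  rw [← summable_nat_add_iff 1]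
  have : (fun n : ℕ => c * ((((n+1) : ℕ) : ℝ) * R ^ ((n+1) - 1) / (Nat.factorial (n+1) : ℝ)))
      = fun n : ℕ => c * (R ^ n / (Nat.factorial n : ℝ)) := by
    funext n
    have : ((n+1).factorial : ℝ) = ((n:ℝ)+1) * (Nat.factorial n : ℝ) := by
      rw [Nat.factorial_succ]; push_cast; ring
    rw [this]
    have hn : ((n:ℝ)+1) ≠ 0 := by positivity
    simp only [Nat.add_sub_cancel]
    push_cast
    field_simp
  rw [this]
  exact summable_master c R

variable (hν : 0 ≤ ν)
include hν

lemma summable_g (t : ℝ) : Summable (fun k : ℕ => a ν k * t ^ k) := by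
  apply Summable.of_norm_bounded (summable_master (1 / Real.Gamma (ν+1)) |t|)
  intro k
  rw [norm_mul, norm_pow, Real.norm_eq_abs, Real.norm_eq_abs]
  calc |a ν k| * |t| ^ k ≤ 1 / Real.Gamma (ν + 1) * (1 / Nat.factorial k) * |t| ^ k := by
        apply mul_le_mul_of_nonneg_right (a_bound hν k) (by positivity)
    _ = 1 / Real.Gamma (ν+1) * (|t| ^ k / Nat.factorial k) := by ring

lemma summable_g1 (t : ℝ) : Summable (fun k : ℕ => ((k:ℝ)+1) * a ν (k+1) * t ^ k) := by
  apply Summable.of_norm_bounded (summable_master (1 / Real.Gamma (ν+1)) |t|)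
  intro k
  rw [norm_mul, norm_mul, norm_pow, Real.norm_eq_abs, Real.norm_eq_abs, Real.norm_eq_abs,
    abs_of_nonneg (by positivity : (0:ℝ) ≤ (k:ℝ)+1)]
  calc ((k:ℝ)+1) * |a ν (k+1)| * |t| ^ k
      ≤ 1 / Real.Gamma (ν + 1) * (1 / Nat.factorial k) * |t| ^ k := by
        apply mul_le_mul_of_nonneg_right (a_bound_one hν k) (by positivity)
    _ = 1 / Real.Gamma (ν+1) * (|t| ^ k / Nat.factorial k) := by ring

lemma summable_g2 (t : ℝ) :
    Summable (fun k : ℕ => ((k:ℝ)+2) * ((k:ℝ)+1) * a ν (k+2) * t ^ k) := by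
  apply Summable.of_norm_bounded (summable_master (1 / Real.Gamma (ν+1)) |t|)
  intro k
  rw [norm_mul, norm_mul, norm_mul, norm_pow]
  simp only [Real.norm_eq_abs]
  rw [abs_of_nonneg (by positivity : (0:ℝ) ≤ (k:ℝ)+2),
    abs_of_nonneg (by positivity : (0:ℝ) ≤ (k:ℝ)+1)]
  calc ((k:ℝ)+2) * ((k:ℝ)+1) * |a ν (k+2)| * |t| ^ k
      = ((k:ℝ)+2) * (((k:ℝ)+1) * |a ν (k+2)|) * |t| ^ k := by ring
    _ ≤ 1 / Real.Gamma (ν + 1) * (1 / Nat.factorial k) * |t| ^ k := by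
        apply mul_le_mul_of_nonneg_right (a_bound_two hν k) (by positivity)
    _ = 1 / Real.Gamma (ν+1) * (|t| ^ k / Nat.factorial k) := by ring

lemma hasDerivAt_g (t : ℝ) : HasDerivAt (g ν) (g1 ν t) t := by
  classical
  set R : ℝ := |t| + 1 with hR
  have htR : t ∈ Ioo (-R) R := by
    constructor <;> cases abs_cases t <;> simp [hR] <;> linarith [abs_nonneg t]
  have key : HasDerivAt (fun z => ∑' k : ℕ, a ν k * z ^ k)
      (∑' k : ℕ, (k:ℝ) * a ν k * t ^ (k - 1)) t := by
    apply hasDerivAt_tsum_of_isPreconnected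
      (u := fun k : ℕ => 1 / Real.Gamma (ν+1) * ((k:ℝ) * R ^ (k-1) / (Nat.factorial k : ℝ)))
      (summable_shift _ _) isOpen_Ioo (convex_Ioo _ _).isPreconnected
      (g := fun k z => a ν k * z ^ k) (g' := fun k z => (k:ℝ) * a ν k * z ^ (k-1))
      (fun k z _ => by
        simpa [mul_comm, mul_assoc, mul_left_comm] using ((hasDerivAt_pow k z).const_mul (a ν k)))
      ?_ htR (summable_g hν t) htR
    · intro k z hz
      have hzR : |z| ≤ R := by
        rw [abs_le]; exact ⟨hz.1.le, hz.2.le⟩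
      rw [Real.norm_eq_abs, abs_mul, abs_mul, abs_pow, abs_of_nonneg (by positivity : (0:ℝ) ≤ (k:ℝ))]
      have h1 : |z| ^ (k-1) ≤ R ^ (k-1) := by
        apply pow_le_pow_left₀ (abs_nonneg z) hzR
      have h2 : (k:ℝ) * |a ν k| ≤ (k:ℝ) * (1 / Real.Gamma (ν + 1) * (1 / Nat.factorial k)) :=
        mul_le_mul_of_nonneg_left (a_bound hν k) (by positivity)
      calc (k:ℝ) * |a ν k| * |z| ^ (k-1)
          ≤ (k:ℝ) * (1 / Real.Gamma (ν + 1) * (1 / Nat.factorial k)) * R ^ (k-1) := by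
            apply mul_le_mul h2 h1 (by positivity)
            positivity
        _ = 1 / Real.Gamma (ν+1) * ((k:ℝ) * R ^ (k-1) / (Nat.factorial k : ℝ)) := by ring
  have hsum : (∑' k : ℕ, (k:ℝ) * a ν k * t ^ (k - 1)) = g1 ν t := by
    have hs : Summable (fun k : ℕ => (k:ℝ) * a ν k * t ^ (k-1)) := by
      apply Summable.of_norm_bounded
        (summable_shift (1 / Real.Gamma (ν+1)) |t|)
      intro k
      rw [Real.norm_eq_abs, abs_mul, abs_mul, abs_pow,
        abs_of_nonneg (by positivity : (0:ℝ) ≤ (k:ℝ))]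
      have h2 : (k:ℝ) * |a ν k| ≤ (k:ℝ) * (1 / Real.Gamma (ν + 1) * (1 / Nat.factorial k)) :=
        mul_le_mul_of_nonneg_left (a_bound hν k) (by positivity)
      calc (k:ℝ) * |a ν k| * |t| ^ (k-1)
          ≤ (k:ℝ) * (1 / Real.Gamma (ν + 1) * (1 / Nat.factorial k)) * |t| ^ (k-1) :=
            mul_le_mul_of_nonneg_right h2 (by positivity)
        _ = 1 / Real.Gamma (ν+1) * ((k:ℝ) * |t| ^ (k-1) / (Nat.factorial k : ℝ)) := by ring
    rw [Summable.tsum_eq_zero_add hs]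
    simp only [Nat.cast_zero, zero_mul, Nat.cast_add, Nat.cast_one, Nat.add_sub_cancel, zero_add]
    rfl
  rw [hsum] at key
  exact key

lemma hasDerivAt_g1 (t : ℝ) : HasDerivAt (g1 ν) (g2 ν t) t := by
  classical
  set R : ℝ := |t| + 1 with hR
  have htR : t ∈ Ioo (-R) R := by
    constructor <;> cases abs_cases t <;> simp [hR] <;> linarith [abs_nonneg t]
  have bnd : ∀ (k : ℕ) (S : ℝ), 0 ≤ S → (k:ℝ) * |((k:ℝ)+1) * a ν (k+1)| * S
      ≤ 1 / Real.Gamma (ν+1) * ((k:ℝ) * S / (Nat.factorial k : ℝ)) := by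
    intro k S hS
    rw [abs_mul, abs_of_nonneg (by positivity : (0:ℝ) ≤ (k:ℝ)+1)]
    have h2 : (k:ℝ) * (((k:ℝ)+1) * |a ν (k+1)|)
        ≤ (k:ℝ) * (1 / Real.Gamma (ν + 1) * (1 / Nat.factorial k)) :=
      mul_le_mul_of_nonneg_left (a_bound_one hν k) (by positivity)
    calc (k:ℝ) * (((k:ℝ)+1) * |a ν (k+1)|) * S
        ≤ (k:ℝ) * (1 / Real.Gamma (ν + 1) * (1 / Nat.factorial k)) * S :=
          mul_le_mul_of_nonneg_right h2 hS
      _ = 1 / Real.Gamma (ν+1) * ((k:ℝ) * S / (Nat.factorial k : ℝ)) := by ring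
  have key : HasDerivAt (fun z => ∑' k : ℕ, ((k:ℝ)+1) * a ν (k+1) * z ^ k)
      (∑' k : ℕ, (k:ℝ) * (((k:ℝ)+1) * a ν (k+1)) * t ^ (k - 1)) t := by
    apply hasDerivAt_tsum_of_isPreconnected
      (u := fun k : ℕ => 1 / Real.Gamma (ν+1) * ((k:ℝ) * R ^ (k-1) / (Nat.factorial k : ℝ)))
      (summable_shift _ _) isOpen_Ioo (convex_Ioo _ _).isPreconnected
      (g := fun k z => ((k:ℝ)+1) * a ν (k+1) * z ^ k)
      (g' := fun k z => (k:ℝ) * (((k:ℝ)+1) * a ν (k+1)) * z ^ (k-1))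
      (fun k z _ => by
        simpa [mul_comm, mul_assoc, mul_left_comm] using
          ((hasDerivAt_pow k z).const_mul (((k:ℝ)+1) * a ν (k+1))))
      ?_ htR (summable_g1 hν t) htR
    · intro k z hz
      have hzR : |z| ≤ R := by rw [abs_le]; exact ⟨hz.1.le, hz.2.le⟩
      rw [Real.norm_eq_abs, abs_mul, abs_mul, abs_pow,
        abs_of_nonneg (by positivity : (0:ℝ) ≤ (k:ℝ))]
      calc (k:ℝ) * |((k:ℝ)+1) * a ν (k+1)| * |z| ^ (k-1)
          ≤ (k:ℝ) * |((k:ℝ)+1) * a ν (k+1)| * R ^ (k-1) := by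
            apply mul_le_mul_of_nonneg_left (pow_le_pow_left₀ (abs_nonneg z) hzR _) (by positivity)
        _ ≤ 1 / Real.Gamma (ν+1) * ((k:ℝ) * R ^ (k-1) / (Nat.factorial k : ℝ)) := bnd k _ (by positivity)
  have hsum : (∑' k : ℕ, (k:ℝ) * (((k:ℝ)+1) * a ν (k+1)) * t ^ (k - 1)) = g2 ν t := by
    have hs : Summable (fun k : ℕ => (k:ℝ) * (((k:ℝ)+1) * a ν (k+1)) * t ^ (k-1)) := by
      apply Summable.of_norm_bounded (summable_shift (1 / Real.Gamma (ν+1)) |t|)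
      intro k
      rw [Real.norm_eq_abs, abs_mul, abs_mul, abs_pow,
        abs_of_nonneg (by positivity : (0:ℝ) ≤ (k:ℝ))]
      exact bnd k _ (by positivity)
    rw [Summable.tsum_eq_zero_add hs]
    simp only [Nat.cast_zero, zero_mul, Nat.cast_add, Nat.cast_one, Nat.add_sub_cancel, zero_add]
    rw [g2]
    congr 1; funext k; ring
  rw [hsum] at key
  have : (fun z => ∑' k : ℕ, ((k:ℝ)+1) * a ν (k+1) * z ^ k) = g1 ν := rfl
  rwa [this] at key

lemma a_rec (k : ℕ) : ((k:ℝ)+1) * (((k:ℝ) + ν + 1) * a ν (k+1)) = - a ν k := by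
  have h1 : (0:ℝ) < (k:ℝ) + ν + 1 := gamma_arg_pos hν k
  have hG : Real.Gamma (((k+1:ℕ):ℝ) + ν + 1) = ((k:ℝ) + ν + 1) * Real.Gamma ((k:ℝ) + ν + 1) := by
    have : ((k+1:ℕ):ℝ) + ν + 1 = ((k:ℝ) + ν + 1) + 1 := by push_cast; ring
    rw [this, Real.Gamma_add_one h1.ne']
  have hGpos := gamma_pos (ν := ν) hν k
  have hfact : ((k+1).factorial : ℝ) = ((k:ℝ)+1) * (Nat.factorial k : ℝ) := by
    rw [Nat.factorial_succ]; push_cast; ring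
  have hfpos : (0:ℝ) < (Nat.factorial k : ℝ) := by positivity
  rw [a, a, hG, hfact, pow_succ]
  field_simp

lemma g_rec (t : ℝ) : t * g2 ν t + (ν + 1) * g1 ν t + g ν t = 0 := by
  have hs2 : Summable (fun k : ℕ => ((k:ℝ)+2) * ((k:ℝ)+1) * a ν (k+2) * t ^ k) := summable_g2 hν t
  have hsc : Summable (fun k : ℕ => (k:ℝ) * (((k:ℝ)+1) * a ν (k+1)) * t ^ k) := by
    apply Summable.of_norm_bounded
      ((summable_shift (1 / Real.Gamma (ν+1)) |t|).mul_left |t|)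
    intro k
    rw [Real.norm_eq_abs, abs_mul, abs_mul, abs_mul, abs_pow,
      abs_of_nonneg (by positivity : (0:ℝ) ≤ (k:ℝ)),
      abs_of_nonneg (by positivity : (0:ℝ) ≤ (k:ℝ)+1)]
    rcases Nat.eq_zero_or_pos k with hk | hk
    · subst hk; simp
    · obtain ⟨j, rfl⟩ : ∃ j, k = j + 1 := ⟨k - 1, (Nat.succ_pred_eq_of_pos hk).symm⟩
      have hpow : |t| ^ (j+1) = |t| * |t| ^ ((j+1) - 1) := by
        simp [pow_succ, mul_comm]
      have h2 : ((j+1:ℕ):ℝ) * (((j+1:ℕ):ℝ)+1) * |a ν (j+1+1)|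
          ≤ ((j+1:ℕ):ℝ) * (1 / Real.Gamma (ν + 1) * (1 / Nat.factorial (j+1))) := by
        have := a_bound_one hν (j+1)
        push_cast at this ⊢
        nlinarith [this, (show (0:ℝ) < (j:ℝ)+1+1 by positivity)]
      calc ((j+1:ℕ):ℝ) * ((((j+1:ℕ):ℝ)+1) * |a ν (j+1+1)|) * |t| ^ (j+1)
          = ((j+1:ℕ):ℝ) * (((j+1:ℕ):ℝ)+1) * |a ν (j+1+1)| * |t| ^ (j+1) := by ring
        _ ≤ ((j+1:ℕ):ℝ) * (1 / Real.Gamma (ν + 1) * (1 / Nat.factorial (j+1))) * |t| ^ (j+1) :=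
            mul_le_mul_of_nonneg_right h2 (by positivity)
        _ = |t| * (1 / Real.Gamma (ν+1) * (((j+1:ℕ):ℝ) * |t| ^ ((j+1)-1) / (Nat.factorial (j+1) : ℝ))) := by
            rw [hpow]; push_cast; ring
  have e1 : t * g2 ν t = ∑' k : ℕ, (k:ℝ) * (((k:ℝ)+1) * a ν (k+1)) * t ^ k := by
    rw [Summable.tsum_eq_zero_add hsc]
    simp only [Nat.cast_zero, zero_mul, Nat.cast_add, Nat.cast_one, zero_add]
    rw [g2, ← tsum_mul_left]
    congr 1; funext k; push_cast; ring
  have e2 : (ν+1) * g1 ν t = ∑' k : ℕ, (ν+1) * (((k:ℝ)+1) * a ν (k+1) * t ^ k) := by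
    rw [g1, ← tsum_mul_left]
  have hs1 : Summable (fun k : ℕ => (ν+1) * (((k:ℝ)+1) * a ν (k+1) * t ^ k)) :=
    (summable_g1 hν t).mul_left (ν+1)
  have hs0 := summable_g hν t
  rw [e1, e2, g, ← Summable.tsum_add hsc hs1, ← Summable.tsum_add (hsc.add hs1) hs0]
  have : ∀ k : ℕ, ((k:ℝ) * (((k:ℝ)+1) * a ν (k+1)) * t ^ k
      + (ν+1) * (((k:ℝ)+1) * a ν (k+1) * t ^ k)) + a ν k * t ^ k = 0 := by
    intro k
    linear_combination t ^ k * a_rec hν k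
  simp only [this, tsum_zero]

omit hν

lemma besselJ_eq {x : ℝ} (hx : 0 < x) :
    besselJ ν x = (x/2) ^ ν * g ν (x^2/4) := by
  rw [besselJ, g, ← tsum_mul_left]
  congr 1; funext k
  have hx2 : (0:ℝ) < x / 2 := by linarith
  have h1 : (x/2 : ℝ) ^ (2*(k:ℝ) + ν) = (x/2) ^ ν * ((x^2/4) ^ k) := by
    rw [Real.rpow_add hx2]
    have h2 : (x/2 : ℝ) ^ (2*(k:ℝ)) = ((x/2)^(2*k : ℕ) : ℝ) := by
      rw [← Real.rpow_natCast (x/2) (2*k)]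
      push_cast; norm_num
    rw [h2, pow_mul, mul_comm]
    congr 2
    ring
  rw [h1, a]
  ring

noncomputable def u (ν x : ℝ) : ℝ := x ^ (ν + 1/2 : ℝ) * g ν (x^2/4)

noncomputable def u1 (ν x : ℝ) : ℝ :=
  (ν + 1/2) * x ^ (ν + 1/2 - 1 : ℝ) * g ν (x^2/4)
    + x ^ (ν + 1/2 : ℝ) * (g1 ν (x^2/4) * (x/2))

include hν

lemma hasDerivAt_inner (x : ℝ) :
    HasDerivAt (fun y : ℝ => g ν (y^2/4)) (g1 ν (x^2/4) * (x/2)) x := by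
  have hinner : HasDerivAt (fun y : ℝ => y^2/4) (x/2) x := by
    have := (hasDerivAt_pow 2 x).div_const 4
    simpa using this.congr_deriv (by ring)
  exact (hasDerivAt_g hν (x^2/4)).comp x hinner

lemma hasDerivAt_u {x : ℝ} (hx : 0 < x) : HasDerivAt (u ν) (u1 ν x) x := by
  have h1 : HasDerivAt (fun y : ℝ => y ^ (ν + 1/2 : ℝ))
      ((ν + 1/2) * x ^ (ν + 1/2 - 1 : ℝ)) x :=
    Real.hasDerivAt_rpow_const (Or.inl hx.ne')
  exact (h1.mul (hasDerivAt_inner hν x))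

lemma hasDerivAt_u1 {x : ℝ} (hx : 0 < x) :
    HasDerivAt (u1 ν) (((ν + 1/2) * (ν - 1/2) / x^2 - 1) * u ν x) x := by
  have hxne : x ≠ 0 := hx.ne'
  have h1 : HasDerivAt (fun y : ℝ => y ^ (ν + 1/2 - 1 : ℝ))
      ((ν + 1/2 - 1) * x ^ (ν + 1/2 - 1 - 1 : ℝ)) x :=
    Real.hasDerivAt_rpow_const (Or.inl hxne)
  have h2 : HasDerivAt (fun y : ℝ => y ^ (ν + 1/2 : ℝ))
      ((ν + 1/2) * x ^ (ν + 1/2 - 1 : ℝ)) x :=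
    Real.hasDerivAt_rpow_const (Or.inl hxne)
  have hg' := hasDerivAt_inner hν (ν := ν) x
  have hg1' : HasDerivAt (fun y : ℝ => g1 ν (y^2/4)) (g2 ν (x^2/4) * (x/2)) x := by
    have hinner : HasDerivAt (fun y : ℝ => y^2/4) (x/2) x := by
      have := (hasDerivAt_pow 2 x).div_const 4
      simpa using this.congr_deriv (by ring)
    exact (hasDerivAt_g1 hν (x^2/4)).comp x hinner
  have hid : HasDerivAt (fun y : ℝ => y / 2) (1/2 : ℝ) x := (hasDerivAt_id x).div_const 2
  have hA : HasDerivAt (fun y : ℝ => (ν + 1/2) * y ^ (ν + 1/2 - 1 : ℝ) * g ν (y^2/4))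
      (((ν + 1/2) * ((ν + 1/2 - 1) * x ^ (ν + 1/2 - 1 - 1 : ℝ))) * g ν (x^2/4)
        + (ν + 1/2) * x ^ (ν + 1/2 - 1 : ℝ) * (g1 ν (x^2/4) * (x/2))) x :=
    (h1.const_mul (ν + 1/2)).mul hg'
  have hB : HasDerivAt (fun y : ℝ => y ^ (ν + 1/2 : ℝ) * (g1 ν (y^2/4) * (y/2)))
      ((ν + 1/2) * x ^ (ν + 1/2 - 1 : ℝ) * (g1 ν (x^2/4) * (x/2))
        + x ^ (ν + 1/2 : ℝ) * ((g2 ν (x^2/4) * (x/2)) * (x/2) + g1 ν (x^2/4) * (1/2))) x :=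
    h2.mul (hg1'.mul hid)
  have htot := hA.add hB
  have huu : u1 ν = fun y : ℝ => (ν + 1/2) * y ^ (ν + 1/2 - 1 : ℝ) * g ν (y^2/4)
      + y ^ (ν + 1/2 : ℝ) * (g1 ν (y^2/4) * (y/2)) := rfl
  rw [huu]
  refine htot.congr_deriv (Eq.symm ?_)
  -- now an algebraic identity
  have hrec := g_rec hν (x^2/4)
  have hp0 : x ^ (ν + 1/2 - 1 : ℝ) = x ^ (ν + 1/2 - 1 - 1 : ℝ) * x := by
    rw [← Real.rpow_add_one hxne (ν + 1/2 - 1 - 1)]; congr 1; ring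
  have hp1 : x ^ (ν + 1/2 : ℝ) = x ^ (ν + 1/2 - 1 - 1 : ℝ) * x * x := by
    rw [← Real.rpow_add_one hxne (ν + 1/2 - 1 - 1), ← Real.rpow_add_one hxne]; congr 1; ring
  rw [u, hp1, hp0]
  set X := x ^ (ν + 1/2 - 1 - 1 : ℝ) with hX
  set G := g ν (x^2/4)
  set G1 := g1 ν (x^2/4)
  set G2 := g2 ν (x^2/4)
  have key2 : x^2 * G2 = 4 * (-(ν+1) * G1 - G) := by linarith
  field_simp
  linear_combination (-X * x^2) * key2

omit hν

lemma g_zero (hν : 0 ≤ ν) : g ν 0 = 1 / Real.Gamma (ν + 1) := by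
  rw [g, tsum_eq_single 0 (fun k hk => by simp [zero_pow hk])]
  have : ((0:ℕ):ℝ) + ν + 1 = ν + 1 := by push_cast; ring
  simp [a, this]

lemma u_pos (hν : 1 ≤ ν) {x : ℝ} (hx : 0 < x) (hx2 : x^2 ≤ ν^2 - 1/4) : 0 < u ν x := by
  have hν0 : 0 ≤ ν := by linarith
  by_contra hle
  push_neg at hle
  -- positivity of g near 0
  have hg0 : 0 < g ν 0 := by
    rw [g_zero hν0]
    have := Real.Gamma_pos_of_pos (show (0:ℝ) < ν + 1 by linarith)
    positivity
  have hev : ∀ᶠ t in nhds (0:ℝ), 0 < g ν t :=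
    (hasDerivAt_g hν0 (0:ℝ)).continuousAt.eventually (eventually_gt_nhds hg0)
  obtain ⟨ε, hε, hball⟩ := Metric.eventually_nhds_iff.mp hev
  set δ : ℝ := min x (Real.sqrt ε) with hδdef
  have hδpos : 0 < δ := lt_min hx (Real.sqrt_pos.mpr hε)
  have hupos_small : ∀ y : ℝ, 0 < y → y ≤ δ → 0 < u ν y := by
    intro y hy hyδ
    have hyε : y ≤ Real.sqrt ε := le_trans hyδ (min_le_right _ _)
    have hy2 : y^2 ≤ ε := by
      rwa [Real.le_sqrt hy.le hε.le] at hyε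
    have : dist (y^2/4) (0:ℝ) < ε := by
      rw [Real.dist_eq, sub_zero, abs_of_nonneg (by positivity)]
      nlinarith
    have hgy := hball this
    rw [u]
    exact mul_pos (Real.rpow_pos_of_pos hy _) hgy
  -- x is beyond δ
  have hδx : δ < x := by
    rcases lt_or_ge δ x with h | h
    · exact h
    · exact absurd (hupos_small x hx h) (not_lt.mpr hle)
  -- a zero exists in [δ, x]
  have hcontu : ∀ c d : ℝ, 0 < c → ContinuousOn (u ν) (Icc c d) := by
    intro c d hc
    intro y hy
    exact (hasDerivAt_u hν0 (lt_of_lt_of_le hc hy.1)).continuousAt.continuousWithinAt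
  have hzero : ∃ z, δ ≤ z ∧ z ≤ x ∧ u ν z = 0 := by
    rcases eq_or_lt_of_le hle with heq | hlt
    · exact ⟨x, hδx.le, le_rfl, heq⟩
    · have h0mem : (0:ℝ) ∈ Icc (u ν x) (u ν δ) :=
        ⟨hlt.le, (hupos_small δ hδpos le_rfl).le⟩
      obtain ⟨z, hz, hz0⟩ := intermediate_value_Icc' hδx.le (hcontu δ x hδpos) h0mem
      exact ⟨z, hz.1, hz.2, hz0⟩
  obtain ⟨z, hδz, hzx, huz⟩ := hzero
  -- the infimum of zeros in [δ, s]
  have hsq : (0:ℝ) ≤ ν^2 - 1/4 := by nlinarith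
  set s : ℝ := Real.sqrt (ν^2 - 1/4) with hsdef
  have hs2 : s^2 = ν^2 - 1/4 := Real.sq_sqrt hsq
  have hxs : x ≤ s := by
    rw [hsdef, Real.le_sqrt hx.le hsq]
    exact hx2
  set T : Set ℝ := {y | y ∈ Icc δ s ∧ u ν y = 0} with hTdef
  have hTclosed : IsClosed T := by
    have : T = Icc δ s ∩ (u ν) ⁻¹' {0} := by
      ext y; simp [hTdef, and_comm]
    rw [this]
    exact (hcontu δ s hδpos).preimage_isClosed_of_isClosed isClosed_Icc isClosed_singleton
  have hTne : T.Nonempty := ⟨z, ⟨hδz, le_trans hzx hxs⟩, huz⟩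
  have hTbdd : BddBelow T := ⟨δ, fun y hy => hy.1.1⟩
  set z₀ : ℝ := sInf T with hz₀def
  have hz₀T : z₀ ∈ T := hTclosed.csInf_mem hTne hTbdd
  have hz₀pos : 0 < z₀ := lt_of_lt_of_le hδpos hz₀T.1.1
  have hz₀s : z₀ ≤ s := hz₀T.1.2
  -- u > 0 strictly below z₀
  have hbelow : ∀ y, 0 < y → y < z₀ → 0 < u ν y := by
    intro y hy hyz₀
    by_contra hley
    push_neg at hley
    have hδy : δ < y := by
      rcases lt_or_ge δ y with h | h
      · exact h
      · exact absurd (hupos_small y hy h) (not_lt.mpr hley)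
    have : ∃ w, δ ≤ w ∧ w ≤ y ∧ u ν w = 0 := by
      rcases eq_or_lt_of_le hley with heq | hlt
      · exact ⟨y, hδy.le, le_rfl, heq⟩
      · have h0mem : (0:ℝ) ∈ Icc (u ν y) (u ν δ) :=
          ⟨hlt.le, (hupos_small δ hδpos le_rfl).le⟩
        obtain ⟨w, hw, hw0⟩ := intermediate_value_Icc' hδy.le (hcontu δ y hδpos) h0mem
        exact ⟨w, hw.1, hw.2, hw0⟩
    obtain ⟨w, hδw, hwy, huw⟩ := this
    have hwT : w ∈ T := ⟨⟨hδw, by linarith⟩, huw⟩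
    have := csInf_le hTbdd hwT
    linarith
  -- MVT on [z₀/2, z₀]
  have hhalf : z₀ / 2 < z₀ := half_lt_self hz₀pos
  obtain ⟨ξ, hξmem, hξeq⟩ := exists_hasDerivAt_eq_slope (u ν) (u1 ν) hhalf
    (hcontu (z₀/2) z₀ (by positivity))
    (fun y hy => hasDerivAt_u hν0 (lt_trans (by positivity) hy.1))
  have hξpos : 0 < ξ := lt_trans (by positivity) hξmem.1
  have hξz₀ : ξ < z₀ := hξmem.2
  have huhalf : 0 < u ν (z₀/2) := hbelow _ (by positivity) hhalf
  have hξneg : u1 ν ξ < 0 := by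
    rw [hξeq, hz₀T.2]
    have : 0 < z₀ - z₀/2 := by linarith
    apply div_neg_of_neg_of_pos <;> linarith
  -- u1 is monotone below z₀
  have hmono : ∀ y w : ℝ, 0 < y → y ≤ w → w ≤ ξ → u1 ν y ≤ u1 ν w := by
    intro y w hy hyw hwξ
    have hIcc : MonotoneOn (u1 ν) (Icc y w) := by
      apply monotoneOn_of_deriv_nonneg (convex_Icc y w)
      · intro v hv
        exact (hasDerivAt_u1 hν0 (lt_of_lt_of_le hy hv.1)).continuousAt.continuousWithinAt
      · intro v hv
        rw [interior_Icc] at hv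
        exact (hasDerivAt_u1 hν0 (lt_trans hy hv.1)).differentiableAt.differentiableWithinAt
      · intro v hv
        rw [interior_Icc] at hv
        have hvpos : 0 < v := lt_trans hy hv.1
        have hvz₀ : v < z₀ := lt_of_lt_of_le hv.2 (le_trans hwξ hξz₀.le)
        rw [(hasDerivAt_u1 hν0 hvpos).deriv]
        have huv : 0 < u ν v := hbelow v hvpos hvz₀
        have hv2 : v^2 ≤ ν^2 - 1/4 := by
          have : v < s := lt_of_lt_of_le hvz₀ hz₀s
          nlinarith [Real.sqrt_nonneg (ν^2 - 1/4), hs2]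
        have hcoef : 0 ≤ (ν + 1/2) * (ν - 1/2) / v^2 - 1 := by
          rw [sub_nonneg, le_div_iff₀ (by positivity)]
          nlinarith
        positivity
    exact hIcc ⟨le_rfl, hyw⟩ ⟨hyw, le_rfl⟩ hyw
  -- u is strictly decreasing up to ξ
  have hanti : ∀ y, 0 < y → y < ξ → u ν ξ < u ν y := by
    intro y hy hyξ
    obtain ⟨η, hηmem, hηeq⟩ := exists_hasDerivAt_eq_slope (u ν) (u1 ν) hyξ
      (hcontu y ξ hy)
      (fun v hv => hasDerivAt_u hν0 (lt_trans hy hv.1))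
    have hη : u1 ν η ≤ u1 ν ξ := hmono η ξ (lt_trans hy hηmem.1) hηmem.2.le le_rfl
    have hne : ξ - y ≠ 0 := sub_ne_zero.mpr (ne_of_gt hyξ)
    rw [eq_div_iff hne] at hηeq
    have hmul1 : u1 ν η * (ξ - y) ≤ u1 ν ξ * (ξ - y) :=
      mul_le_mul_of_nonneg_right hη (by linarith)
    have hmul2 : u1 ν ξ * (ξ - y) < 0 := mul_neg_of_neg_of_pos hξneg (by linarith)
    linarith
  -- limit of u at 0 from the right is 0
  have hcont0 : ContinuousAt (u ν) 0 := by
    have hc1 : ContinuousAt (fun y : ℝ => y ^ (ν + 1/2 : ℝ)) 0 :=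
      Real.continuousAt_rpow_const 0 _ (Or.inr (by linarith))
    have hc2 : ContinuousAt (fun y : ℝ => g ν (y^2/4)) 0 :=
      (hasDerivAt_inner hν0 0).continuousAt
    exact hc1.mul hc2
  have hu0 : u ν 0 = 0 := by
    rw [u, Real.zero_rpow (by linarith : ν + 1/2 ≠ 0), zero_mul]
  have htend : Tendsto (u ν) (nhdsWithin 0 (Ioi 0)) (nhds 0) := by
    have := hcont0.tendsto
    rw [hu0] at this
    exact this.mono_left nhdsWithin_le_nhds
  have hle0 : u ν ξ ≤ 0 := by
    apply ge_of_tendsto htend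
    filter_upwards [Ioo_mem_nhdsGT hξpos] with y hy
    exact (hanti y hy.1 hy.2).le
  exact absurd (hbelow ξ hξpos hξz₀) (not_lt.mpr hle0)

lemma g_pos_of_besselJ (hν : 1 ≤ ν) {x : ℝ} (hx : 0 < x) (hx2 : x^2 ≤ ν^2 - 1/4) :
    0 < besselJ ν x := by
  have hu := u_pos hν hx hx2
  rw [u] at hu
  have hxp : 0 < x ^ (ν + 1/2 : ℝ) := Real.rpow_pos_of_pos hx _
  have hg : 0 < g ν (x^2/4) := by
    by_contra h
    push_neg at h
    nlinarith
  rw [besselJ_eq hx]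
  exact mul_pos (Real.rpow_pos_of_pos (by linarith) _) hg

lemma sturm_zero {uu uu' q : ℝ → ℝ} {c κ : ℝ} (hκ : 0 < κ)
    (hu : ∀ x ∈ Icc c (c + π/κ), HasDerivAt uu (uu' x) x)
    (hu' : ∀ x ∈ Icc c (c + π/κ), HasDerivAt uu' (-(q x * uu x)) x)
    (hq : ∀ x ∈ Icc c (c + π/κ), κ^2 ≤ q x) :
    ∃ z ∈ Icc c (c + π/κ), uu z = 0 := by
  by_contra hcon
  push_neg at hcon
  have hπ : 0 < π/κ := div_pos Real.pi_pos hκ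
  set d := c + π/κ with hd
  have hcd : c < d := by rw [hd]; linarith
  have hcont : ContinuousOn uu (Icc c d) := fun y hy => (hu y hy).continuousAt.continuousWithinAt
  set sgn : ℝ := if 0 < uu c then 1 else -1 with hsgn
  have hsgnpos : ∀ x ∈ Icc c d, 0 < sgn * uu x := by
    intro x hx
    have hxne : uu x ≠ 0 := hcon x hx
    have hcne : uu c ≠ 0 := hcon c ⟨le_rfl, hcd.le⟩
    have hsub : Icc c x ⊆ Icc c d := Icc_subset_Icc_right hx.2
    by_cases h : 0 < uu c
    · rw [hsgn, if_pos h, one_mul]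
      rcases hxne.lt_or_gt with hneg | hpos
      · exfalso
        have h0mem : (0:ℝ) ∈ Icc (uu x) (uu c) := ⟨hneg.le, h.le⟩
        obtain ⟨w, hw, hw0⟩ := intermediate_value_Icc' hx.1 (hcont.mono hsub) h0mem
        exact hcon w (hsub hw) hw0
      · exact hpos
    · rw [hsgn, if_neg h, neg_one_mul, neg_pos]
      push_neg at h
      have hcneg : uu c < 0 := lt_of_le_of_ne h hcne
      rcases hxne.lt_or_gt with hneg | hpos
      · exact hneg
      · exfalso
        have h0mem : (0:ℝ) ∈ Icc (uu c) (uu x) := ⟨hcneg.le, hpos.le⟩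
        obtain ⟨w, hw, hw0⟩ := intermediate_value_Icc hx.1 (hcont.mono hsub) h0mem
        exact hcon w (hsub hw) hw0
  set W : ℝ → ℝ := fun x =>
    sgn * (uu x * (κ * Real.cos (κ*(x - c))) - uu' x * Real.sin (κ*(x - c))) with hW
  have hWderiv : ∀ x ∈ Icc c d,
      HasDerivAt W (sgn * ((q x - κ^2) * (uu x * Real.sin (κ*(x - c))))) x := by
    intro x hx
    have hinner : HasDerivAt (fun y : ℝ => κ*(y - c)) κ x := by
      simpa using ((hasDerivAt_id x).sub_const c).const_mul κ
    have hsin : HasDerivAt (fun y : ℝ => Real.sin (κ*(y - c)))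
        (Real.cos (κ*(x - c)) * κ) x := (Real.hasDerivAt_sin _).comp x hinner
    have hcos : HasDerivAt (fun y : ℝ => Real.cos (κ*(y - c)))
        (-Real.sin (κ*(x - c)) * κ) x := (Real.hasDerivAt_cos _).comp x hinner
    have hA : HasDerivAt (fun y => uu y * (κ * Real.cos (κ*(y - c))))
        (uu' x * (κ * Real.cos (κ*(x - c))) + uu x * ((-Real.sin (κ*(x - c)) * κ) * κ)) x := by
      have := (hu x hx).mul (hcos.const_mul κ)
      refine this.congr_deriv (Eq.symm ?_)
      ring
    have hB : HasDerivAt (fun y => uu' y * Real.sin (κ*(y - c)))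
        (-(q x * uu x) * Real.sin (κ*(x - c)) + uu' x * (Real.cos (κ*(x - c)) * κ)) x :=
      (hu' x hx).mul hsin
    have := ((hA.sub hB).const_mul sgn)
    refine this.congr_deriv (Eq.symm ?_)
    ring
  have hWmono : MonotoneOn W (Icc c d) := by
    apply monotoneOn_of_deriv_nonneg (convex_Icc c d)
    · exact fun y hy => (hWderiv y hy).continuousAt.continuousWithinAt
    · intro y hy
      rw [interior_Icc] at hy
      exact (hWderiv y (Ioo_subset_Icc_self hy)).differentiableAt.differentiableWithinAt
    · intro y hy
      rw [interior_Icc] at hy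
      have hymem : y ∈ Icc c d := Ioo_subset_Icc_self hy
      rw [(hWderiv y hymem).deriv]
      have hsinpos : 0 ≤ Real.sin (κ*(y - c)) := by
        apply Real.sin_nonneg_of_nonneg_of_le_pi
        · have := hy.1; nlinarith
        · have hyd : y ≤ d := hymem.2
          have : κ * (y - c) ≤ κ * (d - c) := by nlinarith
          have hdc : κ * (d - c) = π := by
            rw [hd]; field_simp; ring
          linarith
      have h1 : 0 ≤ q y - κ^2 := sub_nonneg.mpr (hq y hymem)
      have h2 : 0 < sgn * uu y := hsgnpos y hymem
      calc (0:ℝ) ≤ (q y - κ^2) * ((sgn * uu y) * Real.sin (κ*(y - c))) := by positivity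
        _ = sgn * ((q y - κ^2) * (uu y * Real.sin (κ*(y - c)))) := by ring
  have hWc : W c = κ * (sgn * uu c) := by
    rw [hW]
    simp
    ring
  have hWd : W d = -(κ * (sgn * uu d)) := by
    have hdc : κ * (d - c) = π := by rw [hd]; field_simp; ring
    rw [hW]
    simp only [hdc, Real.cos_pi, Real.sin_pi]
    ring
  have hle := hWmono ⟨le_rfl, hcd.le⟩ ⟨hcd.le, le_rfl⟩ hcd.le
  rw [hWc, hWd] at hle
  have h1 : 0 < sgn * uu c := hsgnpos c ⟨le_rfl, hcd.le⟩
  have h2 : 0 < sgn * uu d := hsgnpos d ⟨hcd.le, le_rfl⟩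
  nlinarith

lemma besselJ_zero_of_u (hν : 0 ≤ ν) {x : ℝ} (hx : 0 < x) (h : u ν x = 0) :
    besselJ ν x = 0 := by
  rw [besselJ_eq hx]
  rw [u] at h
  have hxp : x ^ (ν + 1/2 : ℝ) ≠ 0 := (Real.rpow_pos_of_pos hx _).ne'
  rcases mul_eq_zero.mp h with h | h
  · exact absurd h hxp
  · rw [h, mul_zero]

lemma exists_two_zeros (hν : 1 ≤ ν) {aa : ℝ} (ha : 1 < aa) :
    ∃ z₁ z₂ : ℝ, aa*ν ≤ z₁ ∧ z₁ < z₂ ∧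
      z₂ ≤ aa*ν + 2*(π / Real.sqrt (1 - 1/aa^2)) + 1 ∧
      besselJ ν z₁ = 0 ∧ besselJ ν z₂ = 0 := by
  have hν0 : (0:ℝ) ≤ ν := by linarith
  set κ := Real.sqrt (1 - 1/aa^2) with hκdef
  have haa : 0 < aa := by linarith
  have h1a : 0 < 1 - 1/aa^2 := by
    have : 1/aa^2 < 1 := by rw [div_lt_one (by positivity)]; nlinarith
    linarith
  have hκpos : 0 < κ := Real.sqrt_pos.mpr h1a
  have hκ2 : κ^2 = 1 - 1/aa^2 := Real.sq_sqrt h1a.le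
  have hL : 0 < π/κ := div_pos Real.pi_pos hκpos
  have main : ∀ c : ℝ, aa*ν ≤ c → ∃ z ∈ Icc c (c + π/κ), u ν z = 0 := by
    intro c hc
    have hcpos : 0 < c := lt_of_lt_of_le (by nlinarith) hc
    apply sturm_zero hκpos (q := fun x => 1 - (ν+1/2)*(ν-1/2)/x^2)
      (uu := u ν) (uu' := u1 ν)
    · intro x hx; exact hasDerivAt_u hν0 (lt_of_lt_of_le hcpos hx.1)
    · intro x hx
      have hxpos : 0 < x := lt_of_lt_of_le hcpos hx.1
      have := hasDerivAt_u1 hν0 hxpos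
      convert this using 1
      ring
    · intro x hx
      have hxpos : 0 < x := lt_of_lt_of_le hcpos hx.1
      have hxge : aa*ν ≤ x := le_trans hc hx.1
      have hνpos : (0:ℝ) < ν := by linarith
      have haν : 0 < aa*ν := by positivity
      have h3 : aa^2*ν^2 ≤ x^2 := by nlinarith [mul_le_mul hxge hxge haν.le hxpos.le]
      have hdiv : (ν+1/2)*(ν-1/2)/x^2 ≤ 1/aa^2 := by
        rw [div_le_div_iff₀ (by positivity) (by positivity)]
        nlinarith
      rw [hκ2]
      linarith
  obtain ⟨z₁, hz₁mem, hz₁⟩ := main (aa*ν) le_rfl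
  obtain ⟨z₂, hz₂mem, hz₂⟩ := main (aa*ν + π/κ + 1) (by linarith)
  have hz₁pos : 0 < z₁ := lt_of_lt_of_le (by nlinarith) hz₁mem.1
  have hz₂pos : 0 < z₂ := lt_of_lt_of_le (by nlinarith [hL]) hz₂mem.1
  refine ⟨z₁, z₂, hz₁mem.1, ?_, ?_,
    besselJ_zero_of_u hν0 hz₁pos hz₁, besselJ_zero_of_u hν0 hz₂pos hz₂⟩
  · calc z₁ ≤ aa*ν + π/κ := hz₁mem.2
      _ < aa*ν + π/κ + 1 := by linarith
      _ ≤ z₂ := hz₂mem.1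
  · calc z₂ ≤ aa*ν + π/κ + 1 + π/κ := hz₂mem.2
      _ ≤ aa*ν + 2*(π/κ) + 1 := by linarith

lemma besselJZero_bounds (hν : 1 ≤ ν) {aa : ℝ} (ha : 1 < aa) :
    Real.sqrt (ν^2 - 1/4) ≤ besselJZero ν 1 ∧
    Real.sqrt (ν^2 - 1/4) ≤ besselJZero ν 2 ∧
    besselJZero ν 1 ≤ aa*ν + 2*(π / Real.sqrt (1 - 1/aa^2)) + 1 ∧
    besselJZero ν 2 ≤ aa*ν + 2*(π / Real.sqrt (1 - 1/aa^2)) + 1 := by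
  obtain ⟨z₁, z₂, hz₁low, hz₁₂, hz₂up, hJ₁, hJ₂⟩ := exists_two_zeros hν ha
  have hνpos : (0:ℝ) < ν := by linarith
  have hz₁pos : 0 < z₁ := lt_of_lt_of_le (by nlinarith) hz₁low
  have hz₂pos : 0 < z₂ := lt_trans hz₁pos hz₁₂
  set s : ℝ := Real.sqrt (ν^2 - 1/4) with hsdef
  have hsq : (0:ℝ) ≤ ν^2 - 1/4 := by nlinarith
  have hs2 : s^2 = ν^2 - 1/4 := Real.sq_sqrt hsq
  have hsnn : 0 ≤ s := Real.sqrt_nonneg _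
  have hlow : ∀ x : ℝ, 0 < x → besselJ ν x = 0 → s ≤ x := by
    intro x hx hJ
    by_contra hxs
    push_neg at hxs
    have hx2 : x^2 ≤ ν^2 - 1/4 := by nlinarith
    exact absurd hJ (g_pos_of_besselJ hν hx hx2).ne'
  have h1 : besselJZero ν 1 = sInf {x : ℝ | (0:ℝ) < x ∧ besselJ ν x = 0} := rfl
  have h2 : besselJZero ν 2
      = sInf {x : ℝ | besselJZero ν 1 < x ∧ besselJ ν x = 0} := rfl
  have hS₁ne : ({x : ℝ | (0:ℝ) < x ∧ besselJ ν x = 0}).Nonempty := ⟨z₁, hz₁pos, hJ₁⟩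
  have hS₁bdd : BddBelow {x : ℝ | (0:ℝ) < x ∧ besselJ ν x = 0} :=
    ⟨0, fun x hx => hx.1.le⟩
  have hj1low : s ≤ besselJZero ν 1 := by
    rw [h1]
    exact le_csInf hS₁ne (fun x hx => hlow x hx.1 hx.2)
  have hj1z₁ : besselJZero ν 1 ≤ z₁ := by
    rw [h1]
    exact csInf_le hS₁bdd ⟨hz₁pos, hJ₁⟩
  have hS₂ne : ({x : ℝ | besselJZero ν 1 < x ∧ besselJ ν x = 0}).Nonempty :=
    ⟨z₂, lt_of_le_of_lt hj1z₁ hz₁₂, hJ₂⟩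
  have hS₂bdd : BddBelow {x : ℝ | besselJZero ν 1 < x ∧ besselJ ν x = 0} :=
    ⟨besselJZero ν 1, fun x hx => hx.1.le⟩
  have hj2low : s ≤ besselJZero ν 2 := by
    rw [h2]
    apply le_csInf hS₂ne
    intro x hx
    exact hlow x (lt_of_le_of_lt (le_trans hsnn hj1low) hx.1) hx.2
  have hj2z₂ : besselJZero ν 2 ≤ z₂ := by
    rw [h2]
    exact csInf_le hS₂bdd ⟨lt_of_le_of_lt hj1z₁ hz₁₂, hJ₂⟩
  exact ⟨hj1low, hj2low, by linarith, by linarith⟩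

end BesselAux

/-- For any fixed `τ > 0` and `μ > 0`, for all sufficiently large `m` the product
`(2μ(m²−1) − τ² j_{m,1}²)(2μ(m²−1) − τ² j_{m,2}²)` is positive. -/
theorem bessel_zero_quadratic_product_pos
    (τ μ : ℝ) (hτ : 0 < τ) (hμ : 0 < μ) :
    ∃ M : ℕ, ∀ m : ℕ, M ≤ m →
      0 < (2 * μ * ((m : ℝ) ^ 2 - 1) - τ ^ 2 * besselJZero (m : ℝ) 1 ^ 2) *
          (2 * μ * ((m : ℝ) ^ 2 - 1) - τ ^ 2 * besselJZero (m : ℝ) 2 ^ 2) := by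
  by_cases hcase : 2*μ ≤ τ^2
  · -- both factors eventually negative
    refine ⟨2, fun m hm => ?_⟩
    have hm2 : (2:ℝ) ≤ (m:ℝ) := by exact_mod_cast hm
    have hν : (1:ℝ) ≤ (m:ℝ) := by linarith
    obtain ⟨hj1low, hj2low, -, -⟩ :=
      BesselAux.besselJZero_bounds (ν := (m:ℝ)) hν (aa := 2) one_lt_two
    set s : ℝ := Real.sqrt ((m:ℝ)^2 - 1/4) with hsdef
    have hsq : (0:ℝ) ≤ (m:ℝ)^2 - 1/4 := by nlinarith
    have hs2 : s^2 = (m:ℝ)^2 - 1/4 := Real.sq_sqrt hsq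
    have hsnn : 0 ≤ s := Real.sqrt_nonneg _
    have hneg : ∀ j : ℝ, s ≤ j → 2 * μ * ((m : ℝ) ^ 2 - 1) - τ ^ 2 * j ^ 2 < 0 := by
      intro j hj
      have hj2 : s^2 ≤ j^2 := by nlinarith
      nlinarith
    exact mul_pos_of_neg_of_neg (hneg _ hj1low) (hneg _ hj2low)
  · -- both factors eventually positive
    push_neg at hcase
    set r : ℝ := 2*μ/τ^2 with hrdef
    have hr : 1 < r := by
      rw [hrdef, lt_div_iff₀ (by positivity)]
      linarith
    have hrτ : τ^2 * r = 2*μ := by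
      rw [hrdef]; field_simp
    set aa : ℝ := Real.sqrt ((r+1)/2) with haadef
    have haa2 : aa^2 = (r+1)/2 := Real.sq_sqrt (by linarith)
    have ha : 1 < aa := by
      have : (1:ℝ) < (r+1)/2 := by linarith
      nlinarith [Real.sqrt_nonneg ((r+1)/2)]
    have haar : aa^2 < r := by rw [haa2]; linarith
    set D : ℝ := 2*(π / Real.sqrt (1 - 1/aa^2)) + 1 with hDdef
    have hκpos : 0 < Real.sqrt (1 - 1/aa^2) := by
      apply Real.sqrt_pos.mpr
      have : 1/aa^2 < 1 := by rw [div_lt_one (by positivity)]; nlinarith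
      linarith
    have hD : 0 < D := by
      have := div_pos Real.pi_pos hκpos
      rw [hDdef]; linarith
    have hra : 0 < r - aa^2 := by linarith
    refine ⟨max 2 (⌈(2*aa*D + D^2 + r) / (r - aa^2)⌉₊ + 2), fun m hm => ?_⟩
    have hm2 : (2:ℝ) ≤ (m:ℝ) := by
      have := le_trans (le_max_left _ _) hm
      exact_mod_cast this
    have hν : (1:ℝ) ≤ (m:ℝ) := by linarith
    have hmceil : (⌈(2*aa*D + D^2 + r) / (r - aa^2)⌉₊ : ℝ) + 2 ≤ (m:ℝ) := by
      have h : ⌈(2*aa*D + D^2 + r) / (r - aa^2)⌉₊ + 2 ≤ m := le_trans (le_max_right _ _) hm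
      exact_mod_cast h
    have hceil : (2*aa*D + D^2 + r) / (r - aa^2)
        ≤ (⌈(2*aa*D + D^2 + r) / (r - aa^2)⌉₊ : ℝ) := Nat.le_ceil _
    have h5' : (2*aa*D + D^2 + r) / (r - aa^2) ≤ (m:ℝ) - 2 := by linarith
    have h5 : 2*aa*D + D^2 + r ≤ ((m:ℝ) - 2) * (r - aa^2) := (div_le_iff₀ hra).mp h5' 
    have key : (aa*(m:ℝ) + D)^2 < r*((m:ℝ)^2 - 1) := by
      have h6 : (2*aa*D + D^2 + r) * (m:ℝ) ≤ (((m:ℝ) - 2) * (r - aa^2)) * (m:ℝ) :=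
        mul_le_mul_of_nonneg_right h5 (by positivity)
      nlinarith [hD, hra, hm2, mul_pos hra (show (0:ℝ) < (m:ℝ) by linarith), ha]
    obtain ⟨hj1low, hj2low, hj1up, hj2up⟩ :=
      BesselAux.besselJZero_bounds (ν := (m:ℝ)) hν ha
    have hj1nn : 0 ≤ besselJZero (m:ℝ) 1 := le_trans (Real.sqrt_nonneg _) hj1low
    have hj2nn : 0 ≤ besselJZero (m:ℝ) 2 := le_trans (Real.sqrt_nonneg _) hj2low
    have hBnn : (0:ℝ) ≤ aa*(m:ℝ) + D := by positivity
    have hpos : ∀ j : ℝ, 0 ≤ j → j ≤ aa*(m:ℝ) + D →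
        0 < 2 * μ * ((m : ℝ) ^ 2 - 1) - τ ^ 2 * j ^ 2 := by
      intro j hj0 hjup
      have hj2 : j^2 ≤ (aa*(m:ℝ) + D)^2 := by nlinarith
      have : τ^2 * j^2 < τ^2 * (r*((m:ℝ)^2-1)) := by
        have h7 : τ^2 * j^2 ≤ τ^2 * (aa*(m:ℝ) + D)^2 := by nlinarith
        have h8 : τ^2 * (aa*(m:ℝ) + D)^2 < τ^2 * (r*((m:ℝ)^2-1)) := by
          apply mul_lt_mul_of_pos_left key (by positivity)
        linarith
      rw [← mul_assoc, hrτ] at this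
      linarith
    exact mul_pos (hpos _ hj1nn (le_trans hj1up (le_of_eq (by rw [hDdef]; ring))))
      (hpos _ hj2nn (le_trans hj2up (le_of_eq (by rw [hDdef]; ring))))
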